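/- Let G be a graph, X ⊆ V(G), and let 𝒞 be the set of connected components of G − X. Let Y be a feedback vertex set of G and let X* ⊆ X \ Y. Then there are at most |X*| − 1 components C ∈ 𝒞 such that Y ∩ V(C) misses a vertex of 𝒮_G(C, X*) or leaves two vertices of 𝒯_G(C, X*) in the same connected component of C − Y. -/

import Mathlib

/-- `X` is a feedback vertex set of `G`: removing `X` leaves an acyclic graph. -/
def IsFVS {V : Type} (G : SimpleGraph V) (X : Set V) : Prop :=
  (G.induce Xᶜ).IsAcyclic

/-- `X` is a minimum feedback vertex set of `G`. -/
def IsMinFVS {V : Type} (G : SimpleGraph V) (X : Set V) : Prop :=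
  IsFVS G X ∧ ∀ Y : Set V, IsFVS G Y → X.ncard ≤ Y.ncard

/-- Every connected component of `G[A]` contains at most one vertex of `T`. -/
def SeparatedIn {V : Type} (G : SimpleGraph V) (A T : Set V) : Prop :=
  ∀ (t₁ t₂ : V) (h₁ : t₁ ∈ A) (h₂ : t₂ ∈ A), t₁ ∈ T → t₂ ∈ T →
    (G.induce A).Reachable ⟨t₁, h₁⟩ ⟨t₂, h₂⟩ → t₁ = t₂

/-- `X` misses some vertex of `S`, or leaves two vertices of `T` connected in `G - X`. -/
def BadFor {V : Type} (G : SimpleGraph V) (S T X : Set V) : Prop :=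
  (¬ S ⊆ X) ∨ ¬ SeparatedIn G Xᶜ T
/-- The vertices of a component (given by its vertex set `CV`) with at least two
neighbors in `X`. -/
def SVerts {V : Type} (G : SimpleGraph V) (CV X : Set V) : Set V :=
  {v ∈ CV | 2 ≤ (G.neighborSet v ∩ X).ncard}

/-- The vertices of a component (given by its vertex set `CV`) with exactly one
neighbor in `X`. -/
def TVerts {V : Type} (G : SimpleGraph V) (CV X : Set V) : Set V :=
  {v ∈ CV | (G.neighborSet v ∩ X).ncard = 1}

open SimpleGraph

lemma exists_internal {W : Type} {F : SimpleGraph W} {x y : W} (p : F.Walk x y)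
    (hp : p.IsPath) (hl : 2 ≤ p.length) : ∃ v ∈ p.support, v ≠ x ∧ v ≠ y := by
  cases p with
  | nil => simp at hl
  | cons h q =>
    rename_i v
    refine ⟨v, by simp, h.ne', ?_⟩
    cases q with
    | nil => simp at hl
    | cons h' q' =>
      rintro rfl
      have hnd := hp.support_nodup
      rw [Walk.support_cons, Walk.support_cons] at hnd
      exact (List.nodup_cons.mp (List.nodup_cons.mp hnd).2).1 q'.end_mem_support

lemma key {W : Type} {F : SimpleGraph W} (hF : F.IsAcyclic) {ι : Type}
    (a b : ι → W) (P : ∀ i, F.Walk (a i) (b i)) :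
    ∀ (I : Finset ι) (S : Set W), S.Finite →
    (∀ i ∈ I, (P i).IsPath) →
    (∀ i ∈ I, a i ∈ S ∧ b i ∈ S) →
    (∀ i ∈ I, ∀ x ∈ (P i).support, x ∈ S → x = a i ∨ x = b i) →
    (∀ i ∈ I, 2 ≤ (P i).length) →
    (∀ i ∈ I, ∀ j ∈ I, i ≠ j → ∀ x, x ∈ (P i).support → x ∈ (P j).support → x ∈ S) →
    I.card ≤ S.ncard - 1 := by
  classical
  intro I
  induction I using Finset.strongInduction with
  | _ I ih =>
    intro S hSfin h1 h2 h3 h4 h5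
    rcases I.eq_empty_or_nonempty with rfl | ⟨i₀, hi₀⟩
    · simp
    obtain ⟨v, hvp, hva, hvb⟩ := exists_internal (P i₀) (h1 i₀ hi₀) (h4 i₀ hi₀)
    have hvS : v ∉ S := fun hvS => by
      rcases h3 i₀ hi₀ v hvp hvS with rfl | rfl
      · exact hva rfl
      · exact hvb rfl
    set S₁ : Set W := {s | s ∈ S ∧ ∃ w : F.Walk (a i₀) s, v ∉ w.support} with hS₁def
    have ha₁ : a i₀ ∈ S₁ := ⟨(h2 i₀ hi₀).1, Walk.nil, by simp [hva]⟩
    have hb₁ : b i₀ ∉ S₁ := by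
      rintro ⟨hbS, w, hw⟩
      have heq : w.toPath = (⟨P i₀, h1 i₀ hi₀⟩ : F.Path _ _) := hF.path_unique _ _
      have hv' : v ∈ w.toPath.1.support := by rw [heq]; exact hvp
      exact hw (Walk.support_toPath_subset w hv')
    have hstep : ∀ j ∈ I, j ≠ i₀ → (a j ∈ S₁ ↔ b j ∈ S₁) := by
      intro j hj hji
      have hPjv : v ∉ (P j).support := fun hmem =>
        hvS (h5 i₀ hi₀ j hj (fun h => hji h.symm) v hvp hmem)
      constructor
      · rintro ⟨_, w, hw⟩
        refine ⟨(h2 j hj).2, w.append (P j), ?_⟩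
        rw [Walk.mem_support_append_iff]
        rintro (h | h) <;> [exact hw h; exact hPjv h]
      · rintro ⟨_, w, hw⟩
        refine ⟨(h2 j hj).1, w.append (P j).reverse, ?_⟩
        rw [Walk.mem_support_append_iff]
        rintro (h | h)
        · exact hw h
        · rw [Walk.support_reverse, List.mem_reverse] at h; exact hPjv h
    set I' := I.erase i₀ with hI'def
    have hI'sub : ∀ j ∈ I', j ∈ I ∧ j ≠ i₀ := fun j hj =>
      ⟨Finset.mem_of_mem_erase hj, Finset.ne_of_mem_erase hj⟩
    set I₁ := I'.filter (fun j => a j ∈ S₁) with hI₁def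
    set I₂ := I'.filter (fun j => a j ∉ S₁) with hI₂def
    have hI₁I : I₁ ⊂ I := (Finset.filter_subset _ _).trans_ssubset (Finset.erase_ssubset hi₀)
    have hI₂I : I₂ ⊂ I := (Finset.filter_subset _ _).trans_ssubset (Finset.erase_ssubset hi₀)
    have hmem₁ : ∀ j ∈ I₁, j ∈ I ∧ j ≠ i₀ ∧ a j ∈ S₁ ∧ b j ∈ S₁ := by
      intro j hj
      rw [hI₁def, Finset.mem_filter] at hj
      obtain ⟨hj', haj⟩ := hj
      obtain ⟨hjI, hji⟩ := hI'sub j hj'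
      exact ⟨hjI, hji, haj, (hstep j hjI hji).mp haj⟩
    have hmem₂ : ∀ j ∈ I₂, j ∈ I ∧ j ≠ i₀ ∧ a j ∉ S₁ ∧ b j ∉ S₁ := by
      intro j hj
      rw [hI₂def, Finset.mem_filter] at hj
      obtain ⟨hj', haj⟩ := hj
      obtain ⟨hjI, hji⟩ := hI'sub j hj'
      exact ⟨hjI, hji, haj, fun hb => haj ((hstep j hjI hji).mpr hb)⟩
    have hS₁sub : S₁ ⊆ S := fun s hs => hs.1
    have c1 : I₁.card ≤ S₁.ncard - 1 := by
      refine ih I₁ hI₁I S₁ (hSfin.subset hS₁sub) (fun j hj => h1 j (hmem₁ j hj).1)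
        (fun j hj => ⟨(hmem₁ j hj).2.2.1, (hmem₁ j hj).2.2.2⟩)
        (fun j hj x hx hxS => h3 j (hmem₁ j hj).1 x hx (hS₁sub hxS))
        (fun j hj => h4 j (hmem₁ j hj).1) ?_
      intro i hi j hj hij x hxi hxj
      have hxS := h5 i (hmem₁ i hi).1 j (hmem₁ j hj).1 hij x hxi hxj
      rcases h3 i (hmem₁ i hi).1 x hxi hxS with rfl | rfl
      · exact (hmem₁ i hi).2.2.1
      · exact (hmem₁ i hi).2.2.2
    have c2 : I₂.card ≤ (S \ S₁).ncard - 1 := by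
      refine ih I₂ hI₂I (S \ S₁) (hSfin.diff) (fun j hj => h1 j (hmem₂ j hj).1)
        (fun j hj => ⟨⟨(h2 j (hmem₂ j hj).1).1, (hmem₂ j hj).2.2.1⟩,
          ⟨(h2 j (hmem₂ j hj).1).2, (hmem₂ j hj).2.2.2⟩⟩)
        (fun j hj x hx hxS => h3 j (hmem₂ j hj).1 x hx hxS.1)
        (fun j hj => h4 j (hmem₂ j hj).1) ?_
      intro i hi j hj hij x hxi hxj
      have hxS := h5 i (hmem₂ i hi).1 j (hmem₂ j hj).1 hij x hxi hxj
      rcases h3 i (hmem₂ i hi).1 x hxi hxS with rfl | rfl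
      · exact ⟨hxS, (hmem₂ i hi).2.2.1⟩
      · exact ⟨hxS, (hmem₂ i hi).2.2.2⟩
    have hS₁pos : 0 < S₁.ncard := (Set.ncard_pos (hSfin.subset hS₁sub)).mpr ⟨_, ha₁⟩
    have hS₂pos : 0 < (S \ S₁).ncard :=
      (Set.ncard_pos (hSfin.diff)).mpr ⟨b i₀, (h2 i₀ hi₀).2, hb₁⟩
    have hsumI : I₁.card + I₂.card = I'.card := Finset.card_filter_add_card_filter_not _
    have hcardI : I'.card + 1 = I.card := Finset.card_erase_add_one hi₀
    have hsumS : (S \ S₁).ncard + S₁.ncard = S.ncard :=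
      Set.ncard_diff_add_ncard_of_subset hS₁sub hSfin
    omega

theorem stmt8 (V : Type) [Fintype V] (G : SimpleGraph V) (X : Set V)
    (Y : Set V) (hY : IsFVS G Y) (Xstar : Set V) (hsub : Xstar ⊆ X \ Y) :
    {C : (G.induce Xᶜ).ConnectedComponent |
        ¬ SVerts G (Subtype.val '' C.supp) Xstar ⊆ Y ∨
        ¬ SeparatedIn G (Subtype.val '' C.supp \ Y)
            (TVerts G (Subtype.val '' C.supp) Xstar)}.ncard
      ≤ Xstar.ncard - 1 := by
  classical
  have hF : (G.induce Yᶜ).IsAcyclic := hY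
  have hXsX : Xstar ⊆ X := fun x hx => (hsub hx).1
  have hXsY : Xstar ⊆ Yᶜ := fun x hx => (hsub hx).2
  set B := {C : (G.induce Xᶜ).ConnectedComponent |
        ¬ SVerts G (Subtype.val '' C.supp) Xstar ⊆ Y ∨
        ¬ SeparatedIn G (Subtype.val '' C.supp \ Y)
            (TVerts G (Subtype.val '' C.supp) Xstar)} with hBdef
  have hCmem : ∀ (C : (G.induce Xᶜ).ConnectedComponent) (v : V),
      v ∈ Subtype.val '' C.supp →
      ∃ hz : v ∈ Xᶜ, (G.induce Xᶜ).connectedComponentMk ⟨v, hz⟩ = C := by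
    rintro C v ⟨c, hc, rfl⟩
    exact ⟨c.2, by rwa [Subtype.coe_eta, ← SimpleGraph.ConnectedComponent.mem_supp_iff]⟩
  have claim : ∀ C ∈ B, ∃ (x y : ↥Yᶜ) (w : (G.induce Yᶜ).Walk x y), w.IsPath ∧ 2 ≤ w.length ∧
      (x : V) ∈ Xstar ∧ (y : V) ∈ Xstar ∧
      ∀ z ∈ w.support, ((z : V) ∈ Xstar → z = x ∨ z = y) ∧
        ((z : V) ∉ Xstar → ∃ hz : (z : V) ∈ Xᶜ,
          (G.induce Xᶜ).connectedComponentMk ⟨(z : V), hz⟩ = C) := by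
    intro C hC
    rcases hC with hSbad | hTbad
    · -- S case
      rw [Set.not_subset] at hSbad
      obtain ⟨u, ⟨huC, hu2⟩, huY⟩ := hSbad
      obtain ⟨huX, hCu⟩ := hCmem C u huC
      have hu2' : 1 < (G.neighborSet u ∩ Xstar).ncard := by omega
      obtain ⟨x₁, x₂, hx₁, hx₂, hne⟩ :=
        (Set.one_lt_ncard_iff (Set.toFinite _)).mp hu2'
      have hx₁Y : x₁ ∈ Yᶜ := hXsY hx₁.2
      have hx₂Y : x₂ ∈ Yᶜ := hXsY hx₂.2
      have huYc : u ∈ Yᶜ := huY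
      have hadj1 : (G.induce Yᶜ).Adj ⟨x₁, hx₁Y⟩ ⟨u, huYc⟩ := hx₁.1.symm
      have hadj2 : (G.induce Yᶜ).Adj ⟨u, huYc⟩ ⟨x₂, hx₂Y⟩ := hx₂.1
      have hux₁ : u ≠ x₁ := fun h => huX (h ▸ hXsX hx₁.2)
      have hux₂ : u ≠ x₂ := fun h => huX (h ▸ hXsX hx₂.2)
      refine ⟨⟨x₁, hx₁Y⟩, ⟨x₂, hx₂Y⟩, Walk.cons hadj1 (Walk.cons hadj2 Walk.nil), ?_, ?_,
        hx₁.2, hx₂.2, ?_⟩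
      · rw [Walk.isPath_def]
        simp [Subtype.ext_iff, hne, hux₁.symm, hux₂]
      · simp
      · intro z hz
        simp only [Walk.support_cons, Walk.support_nil, List.mem_cons,
          List.not_mem_nil, or_false] at hz
        rcases hz with rfl | rfl | rfl
        · exact ⟨fun _ => Or.inl rfl, fun h => absurd hx₁.2 h⟩
        · exact ⟨fun h => absurd (hXsX h) huX, fun _ => ⟨huX, hCu⟩⟩
        · exact ⟨fun _ => Or.inr rfl, fun h => absurd hx₂.2 h⟩
    · -- T case
      rw [SeparatedIn] at hTbad
      push_neg at hTbad
      obtain ⟨t₁, t₂, h₁, h₂, ht₁, ht₂, hreach, htne⟩ := hTbad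
      obtain ⟨x₁, hx₁eq⟩ := Set.ncard_eq_one.mp ht₁.2
      obtain ⟨x₂, hx₂eq⟩ := Set.ncard_eq_one.mp ht₂.2
      have hx₁ : x₁ ∈ G.neighborSet t₁ ∩ Xstar := by rw [hx₁eq]; rfl
      have hx₂ : x₂ ∈ G.neighborSet t₂ ∩ Xstar := by rw [hx₂eq]; rfl
      have hAsub : (Subtype.val '' C.supp \ Y) ⊆ Yᶜ := fun z hz => hz.2
      let f : G.induce (Subtype.val '' C.supp \ Y) →g G.induce Yᶜ :=
        ⟨fun z => ⟨z.1, hAsub z.2⟩, fun hadj => hadj⟩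
      have finj : Function.Injective f := by
        intro z w h
        have h' := congrArg Subtype.val h
        simp only [f] at h'
        exact Subtype.ext h'
      obtain ⟨q0⟩ := hreach
      set qp := q0.toPath with hqpdef
      set q' := Walk.map f qp.1 with hq'def
      have hq'path : q'.IsPath := Walk.map_isPath_of_injective finj qp.2
      have hq'supp : ∀ z ∈ q'.support, (z : V) ∈ Subtype.val '' C.supp ∧ (z : V) ∉ Xstar := by
        intro z hz
        rw [hq'def, Walk.support_map] at hz
        obtain ⟨z₀, _, rfl⟩ := List.mem_map.mp hz
        refine ⟨z₀.2.1, fun hmem => ?_⟩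
        obtain ⟨hzX, _⟩ := hCmem C _ z₀.2.1
        exact hzX (hXsX hmem)
      have hx₁Y : x₁ ∈ Yᶜ := hXsY hx₁.2
      have hx₂Y : x₂ ∈ Yᶜ := hXsY hx₂.2
      have ht₁Y : t₁ ∈ Yᶜ := h₁.2
      have ht₂Y : t₂ ∈ Yᶜ := h₂.2
      have hadj1 : (G.induce Yᶜ).Adj ⟨x₁, hx₁Y⟩ ⟨t₁, ht₁Y⟩ := hx₁.1.symm
      have hadj2 : (G.induce Yᶜ).Adj ⟨t₂, ht₂Y⟩ ⟨x₂, hx₂Y⟩ := hx₂.1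
      by_cases hxx : x₁ = x₂
      · exfalso
        subst hxx
        have hx₁q' : (⟨x₁, hx₁Y⟩ : ↥Yᶜ) ∉ q'.support := fun hmem =>
          (hq'supp _ hmem).2 hx₁.2
        have hp₁ : (Walk.cons hadj1 q').IsPath :=
          (Walk.cons_isPath_iff _ _).mpr ⟨hq'path, hx₁q'⟩
        have hp₂ : (Walk.cons hadj2.symm Walk.nil :
            (G.induce Yᶜ).Walk ⟨x₁, hx₁Y⟩ ⟨t₂, ht₂Y⟩).IsPath := by
          rw [Walk.isPath_def]
          have hxt : x₁ ≠ t₂ := by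
            intro h
            obtain ⟨hzX, -⟩ := hCmem C t₂ h₂.1
            exact hzX (h ▸ hXsX hx₁.2)
          simp [Subtype.ext_iff, hxt]
        have := hF.path_unique ⟨_, hp₁⟩ ⟨_, hp₂⟩
        have hlen := congrArg (fun p => p.1.length) this
        simp only [Walk.length_cons, Walk.length_nil] at hlen
        have : q'.length = 0 := by omega
        have := Walk.eq_of_length_eq_zero (p := q') this
        exact htne (congrArg Subtype.val this)
      · refine ⟨⟨x₁, hx₁Y⟩, ⟨x₂, hx₂Y⟩, Walk.cons hadj1 (q'.concat hadj2), ?_, ?_, hx₁.2, hx₂.2, ?_⟩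
        · have hx₁q' : (⟨x₁, hx₁Y⟩ : ↥Yᶜ) ∉ q'.support := fun hmem =>
            (hq'supp _ hmem).2 hx₁.2
          have hx₂q' : (⟨x₂, hx₂Y⟩ : ↥Yᶜ) ∉ q'.support := fun hmem =>
            (hq'supp _ hmem).2 hx₂.2
          rw [Walk.isPath_def, Walk.support_cons, Walk.support_concat]
          rw [List.nodup_cons, List.nodup_append]
          refine ⟨?_, hq'path.support_nodup, by simp, ?_⟩
          · rw [List.mem_append]
            rintro (h | h)
            · exact hx₁q' h
            · simp only [List.mem_singleton] at h
              exact hxx (congrArg Subtype.val h)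
          · intro a ha b hb
            simp only [List.mem_singleton] at hb
            subst hb
            exact fun h => hx₂q' (h ▸ ha)
        · rw [Walk.length_cons, Walk.length_concat]; omega
        · intro z hz
          rw [Walk.support_cons, Walk.support_concat] at hz
          simp only [List.mem_cons, List.mem_append, List.mem_singleton,
            List.not_mem_nil, or_false] at hz
          rcases hz with rfl | hz | rfl
          · exact ⟨fun _ => Or.inl rfl, fun h => absurd hx₁.2 h⟩
          · obtain ⟨hzC, hzX⟩ := hq'supp z hz
            exact ⟨fun h => absurd h hzX, fun _ => hCmem C _ hzC⟩
          · exact ⟨fun _ => Or.inr rfl, fun h => absurd hx₂.2 h⟩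
  -- finish: apply key
  haveI : Finite ↥B := Subtype.finite
  haveI := Fintype.ofFinite ↥B
  choose x y w hw1 hw2 hw3 hw4 hw5 using fun (C : ↥B) => claim C.1 C.2
  have h5' : ∀ i ∈ (Finset.univ : Finset ↥B), ∀ j ∈ (Finset.univ : Finset ↥B), i ≠ j →
      ∀ z, z ∈ (w i).support → z ∈ (w j).support → z ∈ {s : ↥Yᶜ | (s : V) ∈ Xstar} := by
    intro i _ j _ hij z hzi hzj
    by_contra hzS
    obtain ⟨hz₁, hC₁⟩ := (hw5 i z hzi).2 hzS
    obtain ⟨hz₂, hC₂⟩ := (hw5 j z hzj).2 hzS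
    exact hij (Subtype.ext (hC₁ ▸ hC₂))
  have hkey := key hF x y w Finset.univ {s : ↥Yᶜ | (s : V) ∈ Xstar} (Set.toFinite _)
    (fun i _ => hw1 i) (fun i _ => ⟨hw3 i, hw4 i⟩)
    (fun i _ z hz hzS => (hw5 i z hz).1 hzS)
    (fun i _ => hw2 i) h5'
  have hcard : (Finset.univ : Finset ↥B).card = B.ncard := by
    rw [← Nat.card_coe_set_eq, Nat.card_eq_fintype_card, Finset.card_univ]
  have himg : Subtype.val '' {s : ↥Yᶜ | (s : V) ∈ Xstar} = Xstar := by
    ext v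
    simp only [Set.mem_image, Set.mem_setOf_eq]
    constructor
    · rintro ⟨s, hs, rfl⟩; exact hs
    · intro hv; exact ⟨⟨v, hXsY hv⟩, hv, rfl⟩
  have hS : ({s : ↥Yᶜ | (s : V) ∈ Xstar}).ncard = Xstar.ncard := by
    conv_rhs => rw [← himg]
    exact (Set.ncard_image_of_injective _ Subtype.val_injective).symm
  rw [hcard, hS] at hkey
  exact hkey
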